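/- Let W be a real symmetric m×m matrix satisfying 1ᵀW = 1ᵀ and W1 = 1, and let z_{t+1} = Wz_t for all t ≥ 0 (the unquantized consensus iteration). Then for all t ≥ 0, ‖z_{t+1} − z_t‖/√m ≤ ‖W − 11ᵀ/m‖ᵗ · ‖W − I‖ · ‖z₀‖_∞, where the matrix norms are spectral (operator 2-)norms, ‖·‖ is the Euclidean norm and ‖·‖_∞ the supremum norm. -/

import Mathlib

open Matrix Finset

/-- The m×m averaging matrix `11ᵀ/m`. -/
noncomputable def avgMat (m : ℕ) : Matrix (Fin m) (Fin m) ℝ := Matrix.of fun _ _ => (1 : ℝ) / m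

/-- The spectral (operator 2-)norm of a real square matrix. -/
noncomputable def spNorm {m : ℕ} (M : Matrix (Fin m) (Fin m) ℝ) : ℝ :=
  ‖Matrix.toEuclideanCLM (𝕜 := ℝ) M‖

/-- The Euclidean norm of a vector in `ℝᵐ`. -/
noncomputable def eucNorm {m : ℕ} (v : Fin m → ℝ) : ℝ := Real.sqrt (∑ i, v i ^ 2)

/-- The supremum norm of a vector in `ℝᵐ`. -/
noncomputable def supNorm {m : ℕ} (v : Fin m → ℝ) : ℝ := ⨆ i, |v i|



lemma spNorm_nonneg {m : ℕ} (M : Matrix (Fin m) (Fin m) ℝ) : 0 ≤ spNorm M :=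
  norm_nonneg _

lemma eucNorm_eq {m : ℕ} (v : Fin m → ℝ) :
    eucNorm v = ‖(WithLp.equiv 2 (Fin m → ℝ)).symm v‖ := by
  rw [EuclideanSpace.norm_eq, eucNorm]
  congr 1
  refine Finset.sum_congr rfl fun i _ => ?_
  simp [WithLp.equiv_symm_apply, Real.norm_eq_abs, sq_abs]

lemma eucNorm_mulVec_le {m : ℕ} (M : Matrix (Fin m) (Fin m) ℝ) (v : Fin m → ℝ) :
    eucNorm (M.mulVec v) ≤ spNorm M * eucNorm v := by
  rw [eucNorm_eq, eucNorm_eq, spNorm]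
  have := (Matrix.toEuclideanCLM (𝕜 := ℝ) M).le_opNorm ((WithLp.equiv 2 (Fin m → ℝ)).symm v)
  exact this

lemma supNorm_nonneg {m : ℕ} (v : Fin m → ℝ) : 0 ≤ supNorm v := by
  rcases Nat.eq_zero_or_pos m with h | h
  · subst h; simp [supNorm, Real.iSup_of_isEmpty]
  · have i : Fin m := ⟨0, h⟩
    refine le_trans (abs_nonneg (v i)) ?_
    rw [supNorm]
    exact le_ciSup (Set.Finite.bddAbove (Set.finite_range fun j => |v j|)) i

lemma eucNorm_le_sqrt_mul_supNorm {m : ℕ} (v : Fin m → ℝ) :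
    eucNorm v ≤ Real.sqrt m * supNorm v := by
  have hle : ∀ i, |v i| ≤ supNorm v := by
    intro i
    rw [supNorm]
    exact le_ciSup (Set.Finite.bddAbove (Set.finite_range fun j => |v j|)) i
  have : eucNorm v ≤ Real.sqrt (∑ _i : Fin m, supNorm v ^ 2) := by
    apply Real.sqrt_le_sqrt
    apply Finset.sum_le_sum
    intro i _
    calc v i ^ 2 = |v i| ^ 2 := (sq_abs _).symm
    _ ≤ supNorm v ^ 2 := by
        apply pow_le_pow_left₀ (abs_nonneg _) (hle i)
  calc eucNorm v ≤ Real.sqrt (∑ _i : Fin m, supNorm v ^ 2) := this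
  _ = Real.sqrt (m * supNorm v ^ 2) := by rw [Finset.sum_const, Finset.card_univ, Fintype.card_fin, nsmul_eq_mul]
  _ = Real.sqrt m * supNorm v := by
      rw [Real.sqrt_mul (Nat.cast_nonneg m), Real.sqrt_sq (supNorm_nonneg v)]


/-- For a real symmetric `m×m` matrix `W` with `1ᵀW = 1ᵀ`, `W1 = 1`, and the
unquantized consensus iteration `z_{t+1} = Wz_t`, for all `t ≥ 0`:
`‖z_{t+1} − z_t‖/√m ≤ ‖W − 11ᵀ/m‖ᵗ · ‖W − I‖ · ‖z₀‖_∞`. -/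
theorem unquantized_successive_difference_decay {m : ℕ} (W : Matrix (Fin m) (Fin m) ℝ)
    (hsym : W.IsSymm)
    (hcol : Matrix.vecMul (fun _ => (1 : ℝ)) W = fun _ => 1)
    (hrow : W.mulVec (fun _ => (1 : ℝ)) = fun _ => 1)
    (z : ℕ → Fin m → ℝ) (hiter : ∀ t, z (t + 1) = W.mulVec (z t)) :
    ∀ t, eucNorm (z (t + 1) - z t) / Real.sqrt m ≤
      spNorm (W - avgMat m) ^ t * spNorm (W - 1) * supNorm (z 0) := by
  set J := avgMat m with hJ
  -- J * W = J
  have hJW : J * W = J := by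
    ext i j
    simp only [Matrix.mul_apply, hJ, avgMat, Matrix.of_apply]
    have : ∑ k, W k j = 1 := by
      have := congrFun hcol j
      simpa [Matrix.vecMul, dotProduct] using this
    rw [← Finset.mul_sum, this, mul_one]
  have hJJ : J * J = J := by
    ext i j
    have hm : (0:ℕ) < m := i.pos
    simp only [Matrix.mul_apply, hJ, avgMat, Matrix.of_apply]
    rw [Finset.sum_const, Finset.card_univ, Fintype.card_fin, nsmul_eq_mul]
    field_simp
  have hJW1 : J * (W - 1) = 0 := by
    rw [Matrix.mul_sub, hJW, Matrix.mul_one, sub_self]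
  -- J * ((W - J)^t * (W-1)) = 0
  have hJX : ∀ t, J * ((W - J) ^ t * (W - 1)) = 0 := by
    intro t
    induction t with
    | zero => simpa using hJW1
    | succ t ih =>
      rw [pow_succ', Matrix.mul_assoc, ← Matrix.mul_assoc J, Matrix.mul_sub, hJW, hJJ,
        sub_self, Matrix.zero_mul]
  -- z (t+1) - z t = ((W - J)^t * (W - 1)).mulVec (z 0)
  have hkey : ∀ t, z (t + 1) - z t = ((W - J) ^ t * (W - 1)).mulVec (z 0) := by
    intro t
    induction t with
    | zero =>
      rw [pow_zero, Matrix.one_mul, Matrix.sub_mulVec, Matrix.one_mulVec, hiter 0]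
    | succ t ih =>
      have : z (t + 2) - z (t + 1) = W.mulVec (z (t + 1) - z t) := by
        rw [hiter (t + 1), hiter t, Matrix.mulVec_sub]
      rw [this, ih, Matrix.mulVec_mulVec]
      congr 1
      have hWX : W * ((W - J) ^ t * (W - 1)) = (W - J) * ((W - J) ^ t * (W - 1)) := by
        rw [Matrix.sub_mul, hJX t, sub_zero]
      rw [hWX, pow_succ', Matrix.mul_assoc]
  intro t
  -- norm bound for the matrix product
  have hnorm : ∀ s, spNorm ((W - J) ^ s * (W - 1)) ≤ spNorm (W - J) ^ s * spNorm (W - 1) := by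
    intro s
    induction s with
    | zero => simp [Matrix.one_mul]
    | succ s ih =>
      rw [pow_succ', Matrix.mul_assoc]
      calc spNorm ((W - J) * ((W - J) ^ s * (W - 1)))
          ≤ spNorm (W - J) * spNorm ((W - J) ^ s * (W - 1)) := by
            simp only [spNorm, _root_.map_mul]
            exact norm_mul_le _ _
        _ ≤ spNorm (W - J) * (spNorm (W - J) ^ s * spNorm (W - 1)) :=
            mul_le_mul_of_nonneg_left ih (spNorm_nonneg _)
        _ = spNorm (W - J) ^ (s + 1) * spNorm (W - 1) := by ring
  have h1 : eucNorm (z (t + 1) - z t) ≤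
      spNorm (W - J) ^ t * spNorm (W - 1) * (Real.sqrt m * supNorm (z 0)) := by
    rw [hkey t]
    calc eucNorm (((W - J) ^ t * (W - 1)).mulVec (z 0))
        ≤ spNorm ((W - J) ^ t * (W - 1)) * eucNorm (z 0) := eucNorm_mulVec_le _ _
      _ ≤ spNorm (W - J) ^ t * spNorm (W - 1) * (Real.sqrt m * supNorm (z 0)) := by
          apply mul_le_mul (hnorm t) (eucNorm_le_sqrt_mul_supNorm _)
          · exact Real.sqrt_nonneg _
          · exact mul_nonneg (pow_nonneg (spNorm_nonneg _) _) (spNorm_nonneg _)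
  rcases Nat.eq_zero_or_pos m with hm | hm
  · subst hm
    have : eucNorm (z (t+1) - z t) = 0 := by simp [eucNorm]
    rw [this]
    simp only [zero_div]
    exact mul_nonneg (mul_nonneg (pow_nonneg (spNorm_nonneg _) _) (spNorm_nonneg _))
      (supNorm_nonneg _)
  · have hs : (0:ℝ) < Real.sqrt m := Real.sqrt_pos.mpr (by exact_mod_cast hm)
    rw [div_le_iff₀ hs]
    calc eucNorm (z (t + 1) - z t)
        ≤ spNorm (W - J) ^ t * spNorm (W - 1) * (Real.sqrt m * supNorm (z 0)) := h1
      _ = spNorm (W - J) ^ t * spNorm (W - 1) * supNorm (z 0) * Real.sqrt m := by ring
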